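/- arXiv:1403.0268 — 2 statements merged into one kernel-verified Lean document; each statement's English description precedes it below -/
import Mathlib

section
/- Let p ∈ (ℝ∪{−∞})ⁿ be nonzero, q ∈ ℝⁿ regular, g ∈ (ℝ∪{−∞})ⁿ, B an n×n matrix over ℝ∪{−∞} with Tr(B) ≤ 0, and θ = max_{1≤i,j≤n}( −q_i + (B*)_{ij} + p_j ) (a real number). Define the n×n matrix S by S_{ij} = max( p_i − θ − q_j , B_{ij} ). Then a regular vector x ∈ ℝⁿ is a feasible minimizer — i.e. it satisfies max(max_j(B_{ij}+x_j), g_i) ≤ x_i for all i and f(x) = θ — if and only if there exists u ∈ ℝⁿ with u_i ≥ g_i for all i and x_i = max_{1≤j≤n}( (S*)_{ij} + u_j ) for all i. -/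
/-!
Max-plus semifield modeled as `WithBot ℝ` (= ℝ ∪ {−∞}); `⊔` is max-plus addition.
The matrix S = θ⁻¹pq⁻ ⊕ B has entries S_{ij} = max(p_i − θ − q_j, B_{ij}).
-/

/-- Max-plus matrix product: (A⊗B)_{ij} = max_k (A_{ik} + B_{kj}). -/
noncomputable def mmul {n : ℕ} (A B : Fin n → Fin n → WithBot ℝ) :
    Fin n → Fin n → WithBot ℝ :=
  fun i j => Finset.univ.sup fun k => A i k + B k j

/-- Max-plus matrix powers, with A⁰ = I (0 on the diagonal, −∞ elsewhere). -/
noncomputable def mpow {n : ℕ} (A : Fin n → Fin n → WithBot ℝ) :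
    ℕ → Fin n → Fin n → WithBot ℝ
  | 0 => fun i j => if i = j then (0 : WithBot ℝ) else ⊥
  | m + 1 => mmul (mpow A m) A

/-- Kleene star: (A*)_{ij} = max_{0 ≤ m ≤ n−1} (A^m)_{ij}. -/
noncomputable def mstar {n : ℕ} (A : Fin n → Fin n → WithBot ℝ) :
    Fin n → Fin n → WithBot ℝ :=
  fun i j => (Finset.range n).sup fun m => mpow A m i j

/-- The objective function f(x) = (max_i (x_i − q_i)) + (max_j (p_j − x_j)). -/
noncomputable def obj {n : ℕ} (p : Fin n → WithBot ℝ) (q : Fin n → ℝ)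
    (x : Fin n → ℝ) : WithBot ℝ :=
  (Finset.univ.sup fun i => ((x i - q i : ℝ) : WithBot ℝ)) +
    (Finset.univ.sup fun j => p j + ((-(x j) : ℝ) : WithBot ℝ))

lemma wb_add_max (a b c : WithBot ℝ) : a + (b ⊔ c) = (a + b) ⊔ (a + c) := by
  rcases le_total b c with h | h
  · rw [sup_eq_right.2 h, sup_eq_right.2 (add_le_add_right h a)]
  · rw [sup_eq_left.2 h, sup_eq_left.2 (add_le_add_right h a)]

lemma wb_add_sup {ι : Type*} (a : WithBot ℝ) (s : Finset ι) (f : ι → WithBot ℝ) :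
    a + s.sup f = s.sup fun i => a + f i := by
  induction s using Finset.cons_induction with
  | empty => simp [WithBot.add_bot]
  | cons i s hi ih => rw [Finset.sup_cons, Finset.sup_cons, wb_add_max, ih]

lemma wb_sup_add {ι : Type*} (a : WithBot ℝ) (s : Finset ι) (f : ι → WithBot ℝ) :
    s.sup f + a = s.sup fun i => f i + a := by
  rw [add_comm, wb_add_sup]; simp [add_comm]

/-- weight of path `f` of length `m` in matrix `A` -/
noncomputable def wsum {n : ℕ} (A : Fin n → Fin n → WithBot ℝ) (f : ℕ → Fin n) (m : ℕ) :
    WithBot ℝ :=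
  ∑ t ∈ Finset.range m, A (f t) (f (t + 1))

lemma wsum_le_mpow {n : ℕ} (A : Fin n → Fin n → WithBot ℝ) (f : ℕ → Fin n) :
    ∀ m, wsum A f m ≤ mpow A m (f 0) (f m) := by
  intro m
  induction m with
  | zero => simp [wsum, mpow]
  | succ m ih =>
    rw [wsum, Finset.sum_range_succ]
    calc (∑ t ∈ Finset.range m, A (f t) (f (t+1))) + A (f m) (f (m+1))
        ≤ mpow A m (f 0) (f m) + A (f m) (f (m+1)) := add_le_add_left ih _
      _ ≤ mpow A (m+1) (f 0) (f (m+1)) := by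
          show _ ≤ mmul (mpow A m) A (f 0) (f (m+1))
          exact Finset.le_sup (f := fun k => mpow A m (f 0) k + A k (f (m+1)))
            (Finset.mem_univ (f m))

lemma wb_eq_bot_or_exists_coe (c : WithBot ℝ) : c = ⊥ ∨ ∃ γ : ℝ, c = (γ : WithBot ℝ) := by
  rcases eq_or_ne c ⊥ with h | h
  · exact Or.inl h
  · obtain ⟨γ, hγ⟩ := WithBot.ne_bot_iff_exists.1 h
    exact Or.inr ⟨γ, hγ.symm⟩

lemma mpow_le_of_paths {n : ℕ} (A : Fin n → Fin n → WithBot ℝ) :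
    ∀ (m : ℕ) (i j : Fin n) (c : WithBot ℝ),
      (∀ f : ℕ → Fin n, f 0 = i → f m = j → wsum A f m ≤ c) → mpow A m i j ≤ c := by
  intro m
  induction m with
  | zero =>
    intro i j c h
    by_cases hij : i = j
    · simpa [mpow, hij, wsum] using h (fun _ => i) rfl hij
    · simp [mpow, hij]
  | succ m ih =>
    intro i j c h
    show mmul (mpow A m) A i j ≤ c
    apply Finset.sup_le
    intro k _
    rcases eq_or_ne (A k j) ⊥ with hkj | hkj
    · simp [hkj, WithBot.add_bot]
    obtain ⟨a, ha⟩ := WithBot.ne_bot_iff_exists.1 hkj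
    -- every path of length m from i to k, extended by j, is bounded by c
    have key : ∀ f : ℕ → Fin n, f 0 = i → f m = k → wsum A f m + (a : WithBot ℝ) ≤ c := by
      intro f h0 hm
      have hf' := h (fun t => if t ≤ m then f t else j) (by simpa using h0)
        (by show (if m + 1 ≤ m then f (m+1) else j) = j; rw [if_neg (by omega)])
      simp only [wsum, Finset.sum_range_succ] at hf'
      have e1 : (∑ t ∈ Finset.range m,
          A (if t ≤ m then f t else j) (if t + 1 ≤ m then f (t+1) else j)) =
          ∑ t ∈ Finset.range m, A (f t) (f (t+1)) := by
        apply Finset.sum_congr rfl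
        intro t ht
        have ht' := Finset.mem_range.1 ht
        rw [if_pos (le_of_lt ht'), if_pos (Nat.succ_le_of_lt ht')]
      rw [e1] at hf'
      have e2 : (if m ≤ m then f m else j) = k := by rw [if_pos le_rfl, hm]
      have e3 : (if m + 1 ≤ m then f (m+1) else j) = j := by
        rw [if_neg (by omega)]
      rw [e2, e3, ← ha] at hf'
      exact hf'
    rcases wb_eq_bot_or_exists_coe c with hc | ⟨γ, hγ⟩
    · subst hc
      have : mpow A m i k ≤ ⊥ := by
        apply ih
        intro f h0 hm
        have := key f h0 hm
        rcases eq_or_ne (wsum A f m) ⊥ with hw | hw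
        · simp [hw]
        · obtain ⟨w, hw'⟩ := WithBot.ne_bot_iff_exists.1 hw
          rw [← hw'] at this
          exact absurd this (by simp [← WithBot.coe_add])
      rw [le_bot_iff] at this
      rw [this, WithBot.bot_add]
    · subst hγ
      have hk : mpow A m i k ≤ ((γ - a : ℝ) : WithBot ℝ) := by
        apply ih
        intro f h0 hm
        have := key f h0 hm
        rcases eq_or_ne (wsum A f m) ⊥ with hw | hw
        · simp [hw]
        · obtain ⟨w, hw'⟩ := WithBot.ne_bot_iff_exists.1 hw
          rw [← hw'] at this ⊢
          rw [← WithBot.coe_add, WithBot.coe_le_coe] at this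
          rw [WithBot.coe_le_coe]
          linarith
      calc mpow A m i k + A k j ≤ ((γ - a : ℝ) : WithBot ℝ) + (a : ℝ) := by
            rw [← ha]; exact add_le_add_left hk _
        _ = (γ : WithBot ℝ) := by rw [← WithBot.coe_add]; norm_num

/-- max-plus application of a matrix to a vector -/
noncomputable def app {n : ℕ} (A : Fin n → Fin n → WithBot ℝ) (x : Fin n → WithBot ℝ)
    (i : Fin n) : WithBot ℝ :=
  Finset.univ.sup fun j => A i j + x j

lemma app_mmul {n : ℕ} (A B : Fin n → Fin n → WithBot ℝ) (x : Fin n → WithBot ℝ) (i : Fin n) :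
    app (mmul A B) x i = app A (app B x) i := by
  unfold app mmul
  calc (Finset.univ.sup fun j => (Finset.univ.sup fun k => A i k + B k j) + x j)
      = Finset.univ.sup fun j => Finset.univ.sup fun k => A i k + (B k j + x j) := by
        apply Finset.sup_congr rfl; intro j _
        rw [wb_sup_add]
        apply Finset.sup_congr rfl; intro k _
        rw [add_assoc]
    _ = Finset.univ.sup fun k => Finset.univ.sup fun j => A i k + (B k j + x j) :=
        Finset.sup_comm _ _ _
    _ = Finset.univ.sup fun k => A i k + Finset.univ.sup fun j => B k j + x j := by
        apply Finset.sup_congr rfl; intro k _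
        rw [wb_add_sup]

lemma app_mono_vec {n : ℕ} (A : Fin n → Fin n → WithBot ℝ) {x y : Fin n → WithBot ℝ}
    (h : ∀ j, x j ≤ y j) (i : Fin n) : app A x i ≤ app A y i :=
  Finset.sup_mono_fun fun j _ => add_le_add_right (h j) _

lemma app_mono_mat {n : ℕ} {A A' : Fin n → Fin n → WithBot ℝ}
    (h : ∀ i j, A i j ≤ A' i j) (x : Fin n → WithBot ℝ) (i : Fin n) :
    app A x i ≤ app A' x i :=
  Finset.sup_mono_fun fun j _ => add_le_add_left (h i j) _

lemma app_id {n : ℕ} (A : Fin n → Fin n → WithBot ℝ) (x : Fin n → WithBot ℝ) (i : Fin n) :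
    app (mpow A 0) x i = x i := by
  unfold app
  apply le_antisymm
  · apply Finset.sup_le
    intro j _
    rcases eq_or_ne i j with rfl | hij
    · simp [mpow]
    · simp [mpow, hij, WithBot.bot_add]
  · have := Finset.le_sup (f := fun j => mpow A 0 i j + x j) (Finset.mem_univ i)
    simpa [mpow] using this

lemma app_pow_le {n : ℕ} (A : Fin n → Fin n → WithBot ℝ) (x : Fin n → WithBot ℝ)
    (h : ∀ i, app A x i ≤ x i) : ∀ m i, app (mpow A m) x i ≤ x i := by
  intro m
  induction m with
  | zero => intro i; rw [app_id]
  | succ m ih =>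
    intro i
    calc app (mpow A (m+1)) x i = app (mpow A m) (app A x) i := app_mmul _ _ _ _
      _ ≤ app (mpow A m) x i := app_mono_vec _ h i
      _ ≤ x i := ih i

lemma app_star {n : ℕ} (A : Fin n → Fin n → WithBot ℝ) (x : Fin n → WithBot ℝ) (i : Fin n) :
    app (mstar A) x i = (Finset.range n).sup fun m => app (mpow A m) x i := by
  unfold app mstar
  calc (Finset.univ.sup fun j => ((Finset.range n).sup fun m => mpow A m i j) + x j)
      = Finset.univ.sup fun j => (Finset.range n).sup fun m => mpow A m i j + x j := by
        apply Finset.sup_congr rfl; intro j _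
        rw [wb_sup_add]
    _ = (Finset.range n).sup fun m => Finset.univ.sup fun j => mpow A m i j + x j :=
        Finset.sup_comm _ _ _

lemma mmul_assoc {n : ℕ} (A B C : Fin n → Fin n → WithBot ℝ) (i j : Fin n) :
    mmul (mmul A B) C i j = mmul A (mmul B C) i j := by
  have h1 : mmul (mmul A B) C i j = app (mmul A B) (fun k => C k j) i := rfl
  have h2 : mmul A (mmul B C) i j = app A (app B (fun k => C k j)) i := rfl
  rw [h1, h2, app_mmul]

lemma mmul_congr_left {n : ℕ} {A A' : Fin n → Fin n → WithBot ℝ}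
    (h : ∀ i j, A i j = A' i j) (B : Fin n → Fin n → WithBot ℝ) (i j : Fin n) :
    mmul A B i j = mmul A' B i j := by
  unfold mmul
  apply Finset.sup_congr rfl
  intro k _
  rw [h]

lemma mpow_succ_left {n : ℕ} (A : Fin n → Fin n → WithBot ℝ) :
    ∀ (m : ℕ) (i j : Fin n), mpow A (m + 1) i j = mmul A (mpow A m) i j := by
  intro m
  induction m with
  | zero =>
    intro i j
    show mmul (mpow A 0) A i j = mmul A (mpow A 0) i j
    have h1 : mmul (mpow A 0) A i j = A i j := by
      unfold mmul
      apply le_antisymm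
      · apply Finset.sup_le
        intro k _
        rcases eq_or_ne i k with rfl | hik
        · simp [mpow]
        · simp [mpow, hik, WithBot.bot_add]
      · have := Finset.le_sup (f := fun k => mpow A 0 i k + A k j) (Finset.mem_univ i)
        simpa [mpow] using this
    have h2 : mmul A (mpow A 0) i j = A i j := by
      unfold mmul
      apply le_antisymm
      · apply Finset.sup_le
        intro k _
        rcases eq_or_ne k j with rfl | hkj
        · simp [mpow]
        · simp [mpow, hkj, WithBot.add_bot]
      · have := Finset.le_sup (f := fun k => A i k + mpow A 0 k j) (Finset.mem_univ j)
        simpa [mpow] using this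
    rw [h1, h2]
  | succ m ih =>
    intro i j
    calc mpow A (m+2) i j = mmul (mpow A (m+1)) A i j := rfl
      _ = mmul (mmul A (mpow A m)) A i j := mmul_congr_left ih A i j
      _ = mmul A (mmul (mpow A m) A) i j := mmul_assoc _ _ _ _ _
      _ = mmul A (mpow A (m+1)) i j := rfl

lemma mpow_add_le {n : ℕ} (A : Fin n → Fin n → WithBot ℝ) (a : ℕ) :
    ∀ (b : ℕ) (i j k : Fin n), mpow A a i k + mpow A b k j ≤ mpow A (a + b) i j := by
  intro b
  induction b with
  | zero =>
    intro i j k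
    rcases eq_or_ne k j with rfl | hkj
    · simp [mpow]
    · simp [mpow, hkj, WithBot.add_bot]
  | succ b ih =>
    intro i j k
    show mpow A a i k + mmul (mpow A b) A k j ≤ mmul (mpow A (a+b)) A i j
    unfold mmul
    rw [wb_add_sup]
    apply Finset.sup_le
    intro l _
    calc mpow A a i k + (mpow A b k l + A l j)
        = (mpow A a i k + mpow A b k l) + A l j := by rw [add_assoc]
      _ ≤ mpow A (a + b) i l + A l j := add_le_add_left (ih i l k) _
      _ ≤ _ := Finset.le_sup (f := fun l => mpow A (a+b) i l + A l j) (Finset.mem_univ l)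

/-- shifted-segment sum equals wsum of the shifted path -/
lemma sum_Ico_edges {n : ℕ} (A : Fin n → Fin n → WithBot ℝ) (f : ℕ → Fin n) (s t : ℕ) :
    (∑ r ∈ Finset.Ico s t, A (f r) (f (r+1))) = wsum A (fun r => f (s + r)) (t - s) := by
  rw [Finset.sum_Ico_eq_sum_range, wsum]
  apply Finset.sum_congr rfl
  intro r _
  rw [Nat.add_assoc]

lemma reduce {n : ℕ} (A : Fin n → Fin n → WithBot ℝ)
    (hA : ∀ c, 1 ≤ c → c ≤ n → ∀ i, mpow A c i i ≤ 0) :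
    ∀ (m : ℕ) (i j : Fin n), mpow A m i j ≤ mstar A i j := by
  intro m
  induction m using Nat.strong_induction_on with
  | _ m ih =>
    intro i j
    by_cases hmn : m < n
    · exact Finset.le_sup (f := fun m => mpow A m i j) (Finset.mem_range.2 hmn)
    push_neg at hmn
    apply mpow_le_of_paths
    intro f h0 hfm
    -- pigeonhole: among f 0, ..., f n two values coincide
    obtain ⟨s', hs', t', ht', hne, heq⟩ :=
      Finset.exists_ne_map_eq_of_card_lt_of_maps_to
        (s := Finset.range (n+1)) (t := (Finset.univ : Finset (Fin n)))
        (by simpa using Nat.lt_succ_self n) (fun a _ => Finset.mem_univ (f a))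
    obtain ⟨s, t, hst, hstt, hfst⟩ : ∃ s t, s < t ∧ t ≤ n ∧ f s = f t := by
      rcases lt_or_gt_of_ne hne with h | h
      · exact ⟨s', t', h, Nat.lt_succ_iff.1 (Finset.mem_range.1 ht'), heq⟩
      · exact ⟨t', s', h, Nat.lt_succ_iff.1 (Finset.mem_range.1 hs'), heq.symm⟩
    set d := t - s with hd
    have hd1 : 1 ≤ d := by omega
    have hdn : d ≤ n := by omega
    have htm : t ≤ m := le_trans hstt hmn
    have hsm : s ≤ m - d := by omega
    set w : ℕ → WithBot ℝ := fun r => A (f r) (f (r+1)) with hw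
    have hsplit : wsum A f m =
        (∑ r ∈ Finset.Ico 0 s, w r) + (∑ r ∈ Finset.Ico s t, w r)
          + (∑ r ∈ Finset.Ico t m, w r) := by
      rw [wsum, Finset.range_eq_Ico,
        ← Finset.sum_Ico_consecutive _ (Nat.zero_le t) htm,
        ← Finset.sum_Ico_consecutive _ (Nat.zero_le s) hst.le]
    have hmid : (∑ r ∈ Finset.Ico s t, w r) ≤ 0 := by
      rw [hw, sum_Ico_edges]
      calc wsum A (fun r => f (s + r)) (t - s)
          ≤ mpow A (t - s) (f (s + 0)) (f (s + (t - s))) := wsum_le_mpow _ _ _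
        _ ≤ 0 := by
            have h1 : s + 0 = s := rfl
            have h2 : s + (t - s) = t := by omega
            rw [h1, h2, ← hfst]
            exact hA d hd1 hdn (f s)
    -- the spliced path
    set F : ℕ → Fin n := fun r => if r < s then f r else f (r + d) with hF
    have hFw : ∀ r, r < m - d → A (F r) (F (r+1)) = (if r < s then w r else w (r + d)) := by
      intro r _
      by_cases hr : r < s
      · rw [if_pos hr]
        have e1 : F r = f r := if_pos hr
        have e2 : F (r+1) = f (r+1) := by
          by_cases hr1 : r + 1 < s
          · exact if_pos hr1
          · have e : F (r+1) = f (r+1+d) := if_neg hr1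
            have hr1' : r + 1 + d = t := by omega
            rw [e, hr1', ← hfst]
            have : s = r + 1 := by omega
            rw [this]
        rw [e1, e2, hw]
      · rw [if_neg hr]
        have hr1 : ¬ (r + 1 < s) := by omega
        have e1 : F r = f (r + d) := if_neg hr
        have e2 : F (r+1) = f (r + 1 + d) := if_neg hr1
        rw [e1, e2, hw, (show r + 1 + d = r + d + 1 by omega)]
    have hnew : wsum A F (m - d) =
        (∑ r ∈ Finset.Ico 0 s, w r) + (∑ r ∈ Finset.Ico t m, w r) := by
      rw [wsum, Finset.range_eq_Ico,
        ← Finset.sum_Ico_consecutive _ (Nat.zero_le s) hsm]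
      congr 1
      · apply Finset.sum_congr rfl
        intro r hr
        have hr' : r < s := (Finset.mem_Ico.1 hr).2
        rw [hFw r (by omega), if_pos hr']
      · rw [Finset.sum_Ico_eq_sum_range, Finset.sum_Ico_eq_sum_range]
        have hc : m - d - s = m - t := by omega
        rw [hc]
        apply Finset.sum_congr rfl
        intro r hr
        have hr' : r < m - t := Finset.mem_range.1 hr
        rw [hFw (s + r) (by omega), if_neg (by omega)]
        congr 1
        omega
    have hend : wsum A F (m - d) ≤ mstar A i j := by
      have h0' : F 0 = i := by
        by_cases h : 0 < s
        · simp only [hF, if_pos h]; exact h0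
        · have hs0 : s = 0 := by omega
          simp only [hF, if_neg (by omega : ¬ (0 < s))]
          have : 0 + d = t := by omega
          rw [this, ← hfst, hs0, h0]
      have hm' : F (m - d) = j := by
        simp only [hF, if_neg (by omega : ¬ (m - d < s))]
        have : m - d + d = m := by omega
        rw [this, hfm]
      calc wsum A F (m - d) ≤ mpow A (m - d) (F 0) (F (m - d)) := wsum_le_mpow _ _ _
        _ = mpow A (m - d) i j := by rw [h0', hm']
        _ ≤ mstar A i j := ih (m - d) (by omega) i j
    calc wsum A f m = (∑ r ∈ Finset.Ico 0 s, w r) + (∑ r ∈ Finset.Ico s t, w r)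
          + (∑ r ∈ Finset.Ico t m, w r) := hsplit
      _ ≤ (∑ r ∈ Finset.Ico 0 s, w r) + 0 + (∑ r ∈ Finset.Ico t m, w r) :=
          add_le_add_left (add_le_add_right hmid _) _
      _ = (∑ r ∈ Finset.Ico 0 s, w r) + (∑ r ∈ Finset.Ico t m, w r) := by rw [add_zero]
      _ = wsum A F (m - d) := hnew.symm
      _ ≤ mstar A i j := hend

section TraceS

variable {n : ℕ} (p : Fin n → WithBot ℝ) (q : Fin n → ℝ) (B : Fin n → Fin n → WithBot ℝ)
  (θ : ℝ)

/-- mixed edge weight: R-type (rank one) if σ t, else B-type -/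
noncomputable def medge (f : ℕ → Fin n) (σ : ℕ → Bool) (t : ℕ) : WithBot ℝ :=
  if σ t then p (f t) + ((-θ - q (f (t + 1)) : ℝ) : WithBot ℝ) else B (f t) (f (t + 1))

lemma coe_split (a : ℝ) : ((-θ - a : ℝ) : WithBot ℝ)
    = ((-θ : ℝ) : WithBot ℝ) + ((-a : ℝ) : WithBot ℝ) := by
  have h : -θ - a = -θ + -a := by ring
  rw [h, WithBot.coe_add]

variable (hB' : ∀ c, 1 ≤ c → c ≤ n → ∀ i, mpow B c i i ≤ 0)
  (hθle : ∀ a b, ((-(q a) : ℝ) : WithBot ℝ) + mstar B a b + p b ≤ (θ : WithBot ℝ))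

include hB' hθle in
lemma cyc : ∀ c, 1 ≤ c → c ≤ n → ∀ f : ℕ → Fin n, f c = f 0 → ∀ σ : ℕ → Bool,
    (∑ t ∈ Finset.range c, medge p q B θ f σ t) ≤ 0 := by
  intro c
  induction c using Nat.strong_induction_on with
  | _ c ihc =>
    intro hc1 hcn f hcyc σ
    set T : Finset ℕ := (Finset.range c).filter (fun t => σ t = true) with hT
    rcases Finset.eq_empty_or_nonempty T with hTe | hTne
    · -- no R-edges: pure B cycle
      have hall : ∀ t, t < c → σ t = false := by
        intro t ht
        by_contra h
        have : t ∈ T := Finset.mem_filter.2 ⟨Finset.mem_range.2 ht,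
          by revert h; cases σ t <;> simp⟩
        rw [hTe] at this; exact absurd this (Finset.notMem_empty t)
      have : (∑ t ∈ Finset.range c, medge p q B θ f σ t) = wsum B f c := by
        apply Finset.sum_congr rfl
        intro t ht
        rw [medge, if_neg (by rw [hall t (Finset.mem_range.1 ht)]; simp)]
      rw [this]
      calc wsum B f c ≤ mpow B c (f 0) (f c) := wsum_le_mpow _ _ _
        _ = mpow B c (f 0) (f 0) := by rw [hcyc]
        _ ≤ 0 := hB' c hc1 hcn (f 0)
    · -- at least one R-edge
      set r1 := T.min' hTne with hr1
      have hr1T : r1 ∈ T := T.min'_mem hTne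
      have hr1c : r1 < c := Finset.mem_range.1 (Finset.mem_filter.1 hr1T).1
      have hσr1 : σ r1 = true := (Finset.mem_filter.1 hr1T).2
      rcases Finset.eq_empty_or_nonempty (T.erase r1) with hTe' | hTne'
      · -- exactly one R-edge, at r1
        have hall : ∀ t, t < c → t ≠ r1 → σ t = false := by
          intro t ht htr
          by_contra h
          have h1 : t ∈ T := Finset.mem_filter.2 ⟨Finset.mem_range.2 ht,
            by revert h; cases σ t <;> simp⟩
          have : t ∈ T.erase r1 := Finset.mem_erase.2 ⟨htr, h1⟩
          rw [hTe'] at this; exact absurd this (Finset.notMem_empty t)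
        -- split the sum at r1
        have hsplit : (∑ t ∈ Finset.range c, medge p q B θ f σ t) =
            (∑ t ∈ Finset.Ico 0 r1, medge p q B θ f σ t) + medge p q B θ f σ r1
              + (∑ t ∈ Finset.Ico (r1+1) c, medge p q B θ f σ t) := by
          rw [Finset.range_eq_Ico,
            ← Finset.sum_Ico_consecutive _ (Nat.zero_le r1) hr1c.le,
            Finset.sum_eq_sum_Ico_succ_bot hr1c, ← add_assoc]
        have hpre : (∑ t ∈ Finset.Ico 0 r1, medge p q B θ f σ t)
            ≤ mpow B r1 (f 0) (f r1) := by
          have : (∑ t ∈ Finset.Ico 0 r1, medge p q B θ f σ t)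
              = ∑ t ∈ Finset.Ico 0 r1, B (f t) (f (t+1)) := by
            apply Finset.sum_congr rfl
            intro t ht
            have ht' := (Finset.mem_Ico.1 ht).2
            rw [medge, if_neg (by rw [hall t (by omega) (by omega)]; simp)]
          rw [this, sum_Ico_edges]
          have h0 : (0:ℕ) + 0 = 0 := rfl
          have := wsum_le_mpow B (fun r => f (0 + r)) (r1 - 0)
          simpa using this
        have hpost : (∑ t ∈ Finset.Ico (r1+1) c, medge p q B θ f σ t)
            ≤ mpow B (c - r1 - 1) (f (r1+1)) (f 0) := by
          have : (∑ t ∈ Finset.Ico (r1+1) c, medge p q B θ f σ t)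
              = ∑ t ∈ Finset.Ico (r1+1) c, B (f t) (f (t+1)) := by
            apply Finset.sum_congr rfl
            intro t ht
            have ht1 := (Finset.mem_Ico.1 ht).1
            have ht2 := (Finset.mem_Ico.1 ht).2
            rw [medge, if_neg (by rw [hall t (by omega) (by omega)]; simp)]
          rw [this, sum_Ico_edges]
          calc wsum B (fun r => f (r1 + 1 + r)) (c - (r1+1))
              ≤ mpow B (c - (r1+1)) (f (r1 + 1 + 0)) (f (r1 + 1 + (c - (r1+1)))) :=
                wsum_le_mpow _ _ _
            _ = mpow B (c - r1 - 1) (f (r1+1)) (f 0) := by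
                rw [(show r1 + 1 + (c - (r1+1)) = c by omega), hcyc,
                  (show c - (r1 + 1) = c - r1 - 1 by omega)]
        have hcomb : mpow B (c - r1 - 1) (f (r1+1)) (f 0) + mpow B r1 (f 0) (f r1)
            ≤ mstar B (f (r1+1)) (f r1) := by
          calc mpow B (c - r1 - 1) (f (r1+1)) (f 0) + mpow B r1 (f 0) (f r1)
              ≤ mpow B (c - r1 - 1 + r1) (f (r1+1)) (f r1) := mpow_add_le _ _ _ _ _ _
            _ ≤ mstar B (f (r1+1)) (f r1) := by
                apply Finset.le_sup (f := fun m => mpow B m (f (r1+1)) (f r1))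
                exact Finset.mem_range.2 (by omega)
        have hEr1 : medge p q B θ f σ r1
            = p (f r1) + ((-θ - q (f (r1+1)) : ℝ) : WithBot ℝ) := by
          rw [medge, if_pos hσr1]
        rw [hsplit, hEr1]
        set M1 := ∑ t ∈ Finset.Ico 0 r1, medge p q B θ f σ t
        set M2 := ∑ t ∈ Finset.Ico (r1+1) c, medge p q B θ f σ t
        calc M1 + (p (f r1) + ((-θ - q (f (r1+1)) : ℝ) : WithBot ℝ)) + M2
            ≤ mpow B r1 (f 0) (f r1) + (p (f r1) + ((-θ - q (f (r1+1)) : ℝ) : WithBot ℝ))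
              + mpow B (c - r1 - 1) (f (r1+1)) (f 0) :=
              add_le_add (add_le_add_left hpre _) hpost
          _ = (((-(q (f (r1+1))) : ℝ) : WithBot ℝ)
                + (mpow B (c - r1 - 1) (f (r1+1)) (f 0) + mpow B r1 (f 0) (f r1))
                + p (f r1)) + ((-θ : ℝ) : WithBot ℝ) := by
              rw [coe_split]
              abel
          _ ≤ (((-(q (f (r1+1))) : ℝ) : WithBot ℝ) + mstar B (f (r1+1)) (f r1)
                + p (f r1)) + ((-θ : ℝ) : WithBot ℝ) := by
              apply add_le_add_left
              apply add_le_add_left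
              exact add_le_add_right hcomb _
          _ ≤ (θ : WithBot ℝ) + ((-θ : ℝ) : WithBot ℝ) :=
              add_le_add_left (hθle _ _) _
          _ = 0 := by rw [← WithBot.coe_add]; norm_num
      · -- at least two R-edges: splice out the segment (r1, r2]
        set r2 := (T.erase r1).min' hTne' with hr2
        have hr2T : r2 ∈ T := Finset.mem_of_mem_erase ((T.erase r1).min'_mem hTne')
        have hr2c : r2 < c := Finset.mem_range.1 (Finset.mem_filter.1 hr2T).1
        have hσr2 : σ r2 = true := (Finset.mem_filter.1 hr2T).2
        have h12 : r1 < r2 := by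
          have hle : r1 ≤ r2 := T.min'_le r2 hr2T
          have hne : r2 ≠ r1 := (Finset.mem_erase.1 ((T.erase r1).min'_mem hTne')).1
          omega
        have hbetween : ∀ u, r1 < u → u < r2 → σ u = false := by
          intro u h1 h2
          by_contra h
          have h1' : u ∈ T := Finset.mem_filter.2 ⟨Finset.mem_range.2 (by omega),
            by revert h; cases σ u <;> simp⟩
          have : u ∈ T.erase r1 := Finset.mem_erase.2 ⟨by omega, h1'⟩
          have := (T.erase r1).min'_le u this
          omega
        set d := r2 - r1 with hd
        set c' := c - d with hc'
        have hc'1 : 1 ≤ c' := by omega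
        have hc'c : c' < c := by omega
        have hr1c' : r1 < c' := by omega
        set f' : ℕ → Fin n := fun u => if u ≤ r1 then f u else f (u + d) with hf'
        set σ' : ℕ → Bool := fun u => if u ≤ r1 then σ u else σ (u + d) with hσ'
        have hcyc' : f' c' = f' 0 := by
          have e1 : f' c' = f (c' + d) := if_neg (by omega)
          have e2 : f' 0 = f 0 := if_pos (Nat.zero_le r1)
          rw [e1, e2, (show c' + d = c by omega), hcyc]
        have hIH := ihc c' hc'c hc'1 (by omega) f' hcyc' σ'
        -- identify the edges of the new cycle
        set NE : WithBot ℝ := p (f r1) + ((-θ - q (f (r2+1)) : ℝ) : WithBot ℝ) with hNE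
        have hE' : ∀ u, u < c' →
            medge p q B θ f' σ' u =
              (if u < r1 then medge p q B θ f σ u
               else if u = r1 then NE else medge p q B θ f σ (u + d)) := by
          intro u hu
          by_cases h1 : u < r1
          · rw [if_pos h1]
            have e1 : f' u = f u := if_pos (by omega)
            have e2 : f' (u+1) = f (u+1) := if_pos (by omega)
            have e3 : σ' u = σ u := if_pos (by omega)
            rw [medge, medge, e1, e2, e3]
          · rw [if_neg h1]
            by_cases h2 : u = r1
            · rw [if_pos h2]
              have e1 : f' u = f u := if_pos (by omega)
              have e2 : f' (u+1) = f (r2+1) := by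
                have e : f' (u+1) = f (u + 1 + d) := if_neg (by omega)
                rw [e, (show u + 1 + d = r2 + 1 by omega)]
              have e3 : σ' u = σ u := if_pos (by omega)
              rw [medge, e1, e2, e3, h2, if_pos hσr1, hNE]
            · rw [if_neg h2]
              have e1 : f' u = f (u + d) := if_neg (by omega)
              have e2 : f' (u+1) = f (u + d + 1) := by
                have : f' (u+1) = f (u + 1 + d) := if_neg (by omega)
                rw [this, (show u + 1 + d = u + d + 1 by omega)]
              have e3 : σ' u = σ (u + d) := if_neg (by omega)
              rw [medge, medge, e1, e2, e3]
        -- decompose the new sum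
        have hnew : (∑ t ∈ Finset.range c', medge p q B θ f' σ' t) =
            (∑ t ∈ Finset.Ico 0 r1, medge p q B θ f σ t) + NE
              + (∑ t ∈ Finset.Ico (r2+1) c, medge p q B θ f σ t) := by
          rw [Finset.range_eq_Ico,
            ← Finset.sum_Ico_consecutive _ (Nat.zero_le r1) hr1c'.le,
            Finset.sum_eq_sum_Ico_succ_bot hr1c', ← add_assoc]
          congr 1
          · congr 1
            · apply Finset.sum_congr rfl
              intro t ht
              have ht' := (Finset.mem_Ico.1 ht).2
              rw [hE' t (by omega), if_pos (by omega)]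
            · rw [hE' r1 (by omega), if_neg (by omega), if_pos rfl]
          · rw [Finset.sum_Ico_eq_sum_range, Finset.sum_Ico_eq_sum_range,
              (show c' - (r1 + 1) = c - (r2 + 1) by omega)]
            apply Finset.sum_congr rfl
            intro t ht
            have ht' := Finset.mem_range.1 ht
            rw [hE' (r1 + 1 + t) (by omega), if_neg (by omega), if_neg (by omega),
              (show r1 + 1 + t + d = r2 + 1 + t by omega)]
        -- decompose the old sum
        have hold : (∑ t ∈ Finset.range c, medge p q B θ f σ t) =
            (∑ t ∈ Finset.Ico 0 r1, medge p q B θ f σ t)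
              + (medge p q B θ f σ r1
                  + (∑ t ∈ Finset.Ico (r1+1) r2, medge p q B θ f σ t)
                  + medge p q B θ f σ r2)
              + (∑ t ∈ Finset.Ico (r2+1) c, medge p q B θ f σ t) := by
          rw [Finset.range_eq_Ico,
            ← Finset.sum_Ico_consecutive _ (Nat.zero_le r1) hr1c.le,
            Finset.sum_eq_sum_Ico_succ_bot hr1c,
            ← Finset.sum_Ico_consecutive _ (show r1 + 1 ≤ r2 by omega) hr2c.le,
            Finset.sum_eq_sum_Ico_succ_bot hr2c]
          abel
        -- the middle chunk is dominated by the new edge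
        have hmidB : (∑ t ∈ Finset.Ico (r1+1) r2, medge p q B θ f σ t)
            ≤ mstar B (f (r1+1)) (f r2) := by
          have : (∑ t ∈ Finset.Ico (r1+1) r2, medge p q B θ f σ t)
              = ∑ t ∈ Finset.Ico (r1+1) r2, B (f t) (f (t+1)) := by
            apply Finset.sum_congr rfl
            intro t ht
            have ht1 := (Finset.mem_Ico.1 ht).1
            have ht2 := (Finset.mem_Ico.1 ht).2
            rw [medge, if_neg (by rw [hbetween t (by omega) (by omega)]; simp)]
          rw [this, sum_Ico_edges]
          calc wsum B (fun r => f (r1 + 1 + r)) (r2 - (r1+1))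
              ≤ mpow B (r2 - (r1+1)) (f (r1 + 1 + 0)) (f (r1 + 1 + (r2 - (r1+1)))) :=
                wsum_le_mpow _ _ _
            _ = mpow B (r2 - (r1+1)) (f (r1+1)) (f r2) := by
                rw [(show r1 + 1 + (r2 - (r1+1)) = r2 by omega)]
            _ ≤ mstar B (f (r1+1)) (f r2) := by
                apply Finset.le_sup (f := fun m => mpow B m (f (r1+1)) (f r2))
                exact Finset.mem_range.2 (by omega)
        have hchunk : medge p q B θ f σ r1
              + (∑ t ∈ Finset.Ico (r1+1) r2, medge p q B θ f σ t)
              + medge p q B θ f σ r2 ≤ NE := by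
          have e1 : medge p q B θ f σ r1
              = p (f r1) + ((-θ - q (f (r1+1)) : ℝ) : WithBot ℝ) := by
            rw [medge, if_pos hσr1]
          have e2 : medge p q B θ f σ r2
              = p (f r2) + ((-θ - q (f (r2+1)) : ℝ) : WithBot ℝ) := by
            rw [medge, if_pos hσr2]
          rw [e1, e2]
          calc p (f r1) + ((-θ - q (f (r1+1)) : ℝ) : WithBot ℝ)
                + (∑ t ∈ Finset.Ico (r1+1) r2, medge p q B θ f σ t)
                + (p (f r2) + ((-θ - q (f (r2+1)) : ℝ) : WithBot ℝ))
              ≤ p (f r1) + ((-θ - q (f (r1+1)) : ℝ) : WithBot ℝ)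
                + mstar B (f (r1+1)) (f r2)
                + (p (f r2) + ((-θ - q (f (r2+1)) : ℝ) : WithBot ℝ)) := by
                apply add_le_add_left
                exact add_le_add_right hmidB _
            _ = (((-(q (f (r1+1))) : ℝ) : WithBot ℝ) + mstar B (f (r1+1)) (f r2)
                  + p (f r2))
                + (p (f r1) + ((-θ - q (f (r2+1)) : ℝ) : WithBot ℝ))
                + ((-θ : ℝ) : WithBot ℝ) := by
                rw [coe_split θ (q (f (r1+1)))]
                abel
            _ ≤ (θ : WithBot ℝ) + NE + ((-θ : ℝ) : WithBot ℝ) := by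
                apply add_le_add_left
                exact add_le_add_left (hθle _ _) _
            _ = NE + ((θ : WithBot ℝ) + ((-θ : ℝ) : WithBot ℝ)) := by abel
            _ = NE := by
                rw [← WithBot.coe_add]
                norm_num
        calc (∑ t ∈ Finset.range c, medge p q B θ f σ t)
            = (∑ t ∈ Finset.Ico 0 r1, medge p q B θ f σ t)
              + (medge p q B θ f σ r1
                  + (∑ t ∈ Finset.Ico (r1+1) r2, medge p q B θ f σ t)
                  + medge p q B θ f σ r2)
              + (∑ t ∈ Finset.Ico (r2+1) c, medge p q B θ f σ t) := hold
          _ ≤ (∑ t ∈ Finset.Ico 0 r1, medge p q B θ f σ t) + NE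
              + (∑ t ∈ Finset.Ico (r2+1) c, medge p q B θ f σ t) :=
              add_le_add_left (add_le_add_right hchunk _) _
          _ = (∑ t ∈ Finset.range c', medge p q B θ f' σ' t) := hnew.symm
          _ ≤ 0 := hIH

include hB' hθle in
lemma trace_S : ∀ c, 1 ≤ c → c ≤ n → ∀ i,
    mpow (fun a b => (p a + ((-θ - q b : ℝ) : WithBot ℝ)) ⊔ B a b) c i i ≤ 0 := by
  intro c hc1 hcn i
  apply mpow_le_of_paths
  intro f h0 hc
  have : wsum (fun a b => (p a + ((-θ - q b : ℝ) : WithBot ℝ)) ⊔ B a b) f c =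
      ∑ t ∈ Finset.range c, medge p q B θ f
        (fun t => decide (B (f t) (f (t+1)) ≤ p (f t) + ((-θ - q (f (t+1)) : ℝ) : WithBot ℝ))) t := by
    apply Finset.sum_congr rfl
    intro t _
    rw [medge]
    show (p (f t) + ((-θ - q (f (t+1)) : ℝ) : WithBot ℝ)) ⊔ B (f t) (f (t+1)) = _
    by_cases h : B (f t) (f (t+1)) ≤ p (f t) + ((-θ - q (f (t+1)) : ℝ) : WithBot ℝ)
    · rw [if_pos (by simp [h]), sup_eq_left.2 h]
    · rw [if_neg (by simp [h]), sup_eq_right.2 (le_of_not_ge h)]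
  rw [wsum] at this ⊢
  rw [this]
  exact cyc p q B θ hB' hθle c hc1 hcn f (by rw [hc, h0]) _

end TraceS

lemma wb_max_add (a b c : WithBot ℝ) : (a ⊔ b) + c = (a + c) ⊔ (b + c) := by
  rw [add_comm, wb_add_max, add_comm a c, add_comm b c]

/-- Characterization of the solutions of the linear-inequality constrained problem:
x is feasible (Bx ⊕ g ≤ x) with f(x) = θ iff x = S*u for some u ≥ g, u ∈ ℝⁿ,
where S_{ij} = max(p_i − θ − q_j, B_{ij}). -/
theorem stmt_7 {n : ℕ} (p : Fin n → WithBot ℝ) (q : Fin n → ℝ)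
    (g : Fin n → WithBot ℝ) (B : Fin n → Fin n → WithBot ℝ)
    (hp : ∃ i, p i ≠ ⊥)
    (hB : ∀ m ∈ Finset.Icc 1 n, ∀ i, mpow B m i i ≤ 0)
    (θ : ℝ)
    (hθ : (θ : WithBot ℝ) = Finset.univ.sup fun i => Finset.univ.sup fun j =>
        ((-(q i) : ℝ) : WithBot ℝ) + mstar B i j + p j)
    (x : Fin n → ℝ) :
    ((∀ i, (Finset.univ.sup fun j => B i j + ((x j : ℝ) : WithBot ℝ)) ⊔ g i ≤
        ((x i : ℝ) : WithBot ℝ)) ∧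
      obj p q x = (θ : WithBot ℝ)) ↔
      ∃ u : Fin n → ℝ,
        (∀ i, g i ≤ ((u i : ℝ) : WithBot ℝ)) ∧
        (∀ i, ((x i : ℝ) : WithBot ℝ) =
          Finset.univ.sup fun j =>
            mstar (fun a b => (p a + ((-θ - q b : ℝ) : WithBot ℝ)) ⊔ B a b) i j +
              ((u j : ℝ) : WithBot ℝ)) := by

  obtain ⟨i0, -⟩ := hp
  have hn : 0 < n := i0.pos
  set Sm : Fin n → Fin n → WithBot ℝ :=
    fun a b => (p a + ((-θ - q b : ℝ) : WithBot ℝ)) ⊔ B a b with hSm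
  set xv : Fin n → WithBot ℝ := fun j => ((x j : ℝ) : WithBot ℝ) with hxv
  have hB' : ∀ c, 1 ≤ c → c ≤ n → ∀ i, mpow B c i i ≤ 0 :=
    fun c h1 h2 i => hB c (Finset.mem_Icc.2 ⟨h1, h2⟩) i
  have hθle : ∀ a b, ((-(q a) : ℝ) : WithBot ℝ) + mstar B a b + p b ≤ (θ : WithBot ℝ) := by
    intro a b
    rw [hθ]
    exact le_trans
      (Finset.le_sup (f := fun j => ((-(q a) : ℝ) : WithBot ℝ) + mstar B a j + p j)
        (Finset.mem_univ b))
      (Finset.le_sup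
        (f := fun i => Finset.univ.sup fun j => ((-(q i) : ℝ) : WithBot ℝ) + mstar B i j + p j)
        (Finset.mem_univ a))
  have hred : ∀ m i j, mpow Sm m i j ≤ mstar Sm i j :=
    reduce Sm (trace_S p q B θ hB' hθle)
  have hRS : ∀ a b, p a + ((-θ - q b : ℝ) : WithBot ℝ) ≤ Sm a b := fun a b => le_sup_left
  have hBS : ∀ a b, B a b ≤ Sm a b := fun a b => le_sup_right
  have hSmul : ∀ i j, mmul Sm (mstar Sm) i j ≤ mstar Sm i j := by
    intro i j
    apply Finset.sup_le
    intro k _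
    show Sm i k + mstar Sm k j ≤ _
    have e : mstar Sm k j = (Finset.range n).sup fun m => mpow Sm m k j := rfl
    rw [e, wb_add_sup]
    apply Finset.sup_le
    intro m _
    calc Sm i k + mpow Sm m k j
        ≤ mmul Sm (mpow Sm m) i j :=
          Finset.le_sup (f := fun k => Sm i k + mpow Sm m k j) (Finset.mem_univ k)
      _ = mpow Sm (m+1) i j := (mpow_succ_left Sm m i j).symm
      _ ≤ mstar Sm i j := hred (m+1) i j
  -- key fact: Sm x ≤ x implies the objective bound and vice versa
  constructor
  · rintro ⟨hfeas, hobj⟩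
    have hBxle : ∀ i, (Finset.univ.sup fun j => B i j + xv j) ≤ xv i :=
      fun i => le_trans le_sup_left (hfeas i)
    have hSx : ∀ i, app Sm xv i ≤ xv i := by
      intro i
      apply Finset.sup_le
      intro j _
      have hsplit : Sm i j + xv j =
          (p i + ((-θ - q j : ℝ) : WithBot ℝ) + xv j) ⊔ (B i j + xv j) := wb_max_add _ _ _
      rw [hsplit]
      apply sup_le
      · rcases wb_eq_bot_or_exists_coe (p i) with hpb | ⟨pi, hpi⟩
        · simp [hpb, WithBot.bot_add]
        · have h1 : ((x j - q j : ℝ) : WithBot ℝ) ≤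
              Finset.univ.sup fun i => ((x i - q i : ℝ) : WithBot ℝ) :=
            Finset.le_sup (f := fun i => ((x i - q i : ℝ) : WithBot ℝ)) (Finset.mem_univ j)
          have h2 : p i + ((-(x i) : ℝ) : WithBot ℝ) ≤
              Finset.univ.sup fun j => p j + ((-(x j) : ℝ) : WithBot ℝ) :=
            Finset.le_sup (f := fun j => p j + ((-(x j) : ℝ) : WithBot ℝ)) (Finset.mem_univ i)
          have h3 := add_le_add h1 h2
          have h4 : ((x j - q j : ℝ) : WithBot ℝ) + (p i + ((-(x i) : ℝ) : WithBot ℝ))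
              ≤ (θ : WithBot ℝ) := by rw [← hobj]; exact h3
          rw [hpi] at h4 ⊢
          show (pi : WithBot ℝ) + ((-θ - q j : ℝ) : WithBot ℝ) + ((x j : ℝ) : WithBot ℝ)
            ≤ ((x i : ℝ) : WithBot ℝ)
          rw [← WithBot.coe_add, ← WithBot.coe_add, WithBot.coe_le_coe]
          rw [← WithBot.coe_add, ← WithBot.coe_add, WithBot.coe_le_coe] at h4
          linarith
      · exact le_trans (Finset.le_sup (f := fun j => B i j + xv j) (Finset.mem_univ j))
          (hBxle i)
    refine ⟨x, fun i => le_trans le_sup_right (hfeas i), fun i => ?_⟩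
    show xv i = app (mstar Sm) xv i
    apply le_antisymm
    · rw [app_star]
      calc xv i = app (mpow Sm 0) xv i := (app_id _ _ _).symm
        _ ≤ _ := Finset.le_sup (f := fun m => app (mpow Sm m) xv i) (Finset.mem_range.2 hn)
    · rw [app_star]
      exact Finset.sup_le fun m _ => app_pow_le Sm xv hSx m i
  · rintro ⟨u, hgu, hxu⟩
    set uv : Fin n → WithBot ℝ := fun j => ((u j : ℝ) : WithBot ℝ) with huv
    have hxapp : ∀ i, xv i = app (mstar Sm) uv i := hxu
    have hux : ∀ i, uv i ≤ xv i := by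
      intro i
      rw [hxapp i, app_star]
      calc uv i = app (mpow Sm 0) uv i := (app_id _ _ _).symm
        _ ≤ _ := Finset.le_sup (f := fun m => app (mpow Sm m) uv i) (Finset.mem_range.2 hn)
    have hSx : ∀ i, app Sm xv i ≤ xv i := by
      intro i
      have e : app Sm xv i = app Sm (fun k => app (mstar Sm) uv k) i := by
        apply Finset.sup_congr rfl
        intro j _
        rw [hxapp j]
      rw [e]
      have e2 : app Sm (fun k => app (mstar Sm) uv k) i = app (mmul Sm (mstar Sm)) uv i :=
        (app_mmul _ _ _ _).symm
      rw [e2]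
      calc app (mmul Sm (mstar Sm)) uv i ≤ app (mstar Sm) uv i := app_mono_mat hSmul uv i
        _ = xv i := (hxapp i).symm
    have hBx : ∀ i, app B xv i ≤ xv i :=
      fun i => le_trans (app_mono_mat hBS xv i) (hSx i)
    have hRx : ∀ a b, p a + ((-θ - q b : ℝ) : WithBot ℝ) + xv b ≤ xv a := by
      intro a b
      calc p a + ((-θ - q b : ℝ) : WithBot ℝ) + xv b ≤ Sm a b + xv b :=
            add_le_add_left (hRS a b) _
        _ ≤ app Sm xv a := Finset.le_sup (f := fun k => Sm a k + xv k) (Finset.mem_univ b)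
        _ ≤ xv a := hSx a
    constructor
    · intro i
      apply sup_le
      · exact hBx i
      · exact le_trans (hgu i) (hux i)
    · apply le_antisymm
      · -- obj ≤ θ
        show (Finset.univ.sup fun i => ((x i - q i : ℝ) : WithBot ℝ)) +
            (Finset.univ.sup fun j => p j + ((-(x j) : ℝ) : WithBot ℝ)) ≤ (θ : WithBot ℝ)
        rw [wb_sup_add]
        apply Finset.sup_le
        intro i _
        rw [wb_add_sup]
        apply Finset.sup_le
        intro j _
        rcases wb_eq_bot_or_exists_coe (p j) with hpb | ⟨pj, hpj⟩
        · simp [hpb, WithBot.bot_add, WithBot.add_bot]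
        · have h := hRx j i
          rw [hpj] at h ⊢
          show ((x i - q i : ℝ) : WithBot ℝ) + (((pj : ℝ) : WithBot ℝ) + ((-(x j) : ℝ) : WithBot ℝ))
            ≤ (θ : WithBot ℝ)
          have hxvi : xv i = ((x i : ℝ) : WithBot ℝ) := rfl
          have hxvj : xv j = ((x j : ℝ) : WithBot ℝ) := rfl
          rw [hxvi, hxvj] at h
          rw [← WithBot.coe_add, ← WithBot.coe_add, WithBot.coe_le_coe] at h
          rw [← WithBot.coe_add, ← WithBot.coe_add, WithBot.coe_le_coe]
          linarith
      · -- θ ≤ obj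
        rw [hθ]
        apply Finset.sup_le
        intro i _
        apply Finset.sup_le
        intro j _
        have hBstar : mstar B i j + xv j ≤ xv i := by
          calc mstar B i j + xv j ≤ app (mstar B) xv i :=
                Finset.le_sup (f := fun k => mstar B i k + xv k) (Finset.mem_univ j)
            _ ≤ xv i := by
                rw [app_star]
                exact Finset.sup_le fun m _ => app_pow_le B xv hBx m i
        have hmono : ((x i - q i : ℝ) : WithBot ℝ) + (p j + ((-(x j) : ℝ) : WithBot ℝ))
            ≤ obj p q x := by
          apply add_le_add
          · exact Finset.le_sup (f := fun i => ((x i - q i : ℝ) : WithBot ℝ)) (Finset.mem_univ i)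
          · exact Finset.le_sup (f := fun j => p j + ((-(x j) : ℝ) : WithBot ℝ)) (Finset.mem_univ j)
        refine le_trans ?_ hmono
        rcases wb_eq_bot_or_exists_coe (p j) with hpb | ⟨pj, hpj⟩
        · simp [hpb, WithBot.bot_add, WithBot.add_bot]
        rcases wb_eq_bot_or_exists_coe (mstar B i j) with hkb | ⟨k, hk⟩
        · rw [hkb]
          simp [WithBot.bot_add, WithBot.add_bot]
        rw [hpj, hk]
        rw [hk] at hBstar
        have hxvi : xv i = ((x i : ℝ) : WithBot ℝ) := rfl
        have hxvj : xv j = ((x j : ℝ) : WithBot ℝ) := rfl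
        rw [hxvi, hxvj] at hBstar
        rw [← WithBot.coe_add, WithBot.coe_le_coe] at hBstar
        rw [← WithBot.coe_add, ← WithBot.coe_add, ← WithBot.coe_add, ← WithBot.coe_add,
          WithBot.coe_le_coe]
        linarith
end

section
/- Let C be a regular n×n matrix over ℝ∪{−∞}, f ∈ ℝⁿ, g ∈ (ℝ∪{−∞})ⁿ with max_{i,j}(C_{ij} + g_j − f_i) ≤ 0, and let θ = max( max_{i,j} C_{ij} , (max_{i,j}(C_{ij}+g_j)) + (max_{i,j}(C_{ij}−f_i)) ). Set c̄_j = max_{1≤k≤n} C_{kj} and r_j = max_{1≤i≤n}(C_{ij} − f_i). Then x ∈ ℝⁿ is a feasible minimizer — i.e. max_j(C_{ij}+x_j) ≤ f_i and g_i ≤ x_i for all i, and F(x) = θ — if and only if there exists u ∈ ℝⁿ with x_i = max( u_i , −θ + max_{1≤j≤n}(c̄_j + u_j) ) for all i, and g_j ≤ u_j ≤ −max( r_j , (max_{1≤k≤n} r_k) − θ + c̄_j ) for all j. -/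
section MaxPlusAux

private lemma wb_add_coe_le_iff (a b : WithBot ℝ) (t : ℝ) :
    a + (t : WithBot ℝ) ≤ b ↔ a ≤ b + ((-t : ℝ) : WithBot ℝ) := by
  constructor
  · intro h
    have h2 := add_le_add_left h ((-t : ℝ) : WithBot ℝ)
    calc a = a + ((t:ℝ):WithBot ℝ) + ((-t:ℝ):WithBot ℝ) := by
            rw [add_assoc, ← WithBot.coe_add, add_neg_cancel, WithBot.coe_zero, add_zero]
      _ ≤ _ := h2
  · intro h
    have h2 := add_le_add_left h ((t:ℝ):WithBot ℝ)
    calc a + ((t:ℝ):WithBot ℝ) ≤ b + ((-t:ℝ):WithBot ℝ) + ((t:ℝ):WithBot ℝ) := h2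
      _ = b := by rw [add_assoc, ← WithBot.coe_add, neg_add_cancel, WithBot.coe_zero, add_zero]

private lemma wb_coe_shift (a : WithBot ℝ) (s t : ℝ) :
    a + (s : WithBot ℝ) ≤ (t : WithBot ℝ) ↔ a ≤ ((t - s : ℝ) : WithBot ℝ) := by
  rw [wb_add_coe_le_iff, ← WithBot.coe_add, show t + -s = t - s from by ring]

private lemma wb_sup_add_s11 (x y a : WithBot ℝ) : (x ⊔ y) + a = (x + a) ⊔ (y + a) := by
  rcases le_total x y with h | h
  · rw [sup_eq_right.mpr h, sup_eq_right.mpr (add_le_add_left h a)]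
  · rw [sup_eq_left.mpr h, sup_eq_left.mpr (add_le_add_left h a)]

private lemma wb_add_sup_s11 (a x y : WithBot ℝ) : a + (x ⊔ y) = (a + x) ⊔ (a + y) := by
  rw [add_comm, wb_sup_add_s11, add_comm x a, add_comm y a]

private lemma wb_inf_add (x y a : WithBot ℝ) : (x ⊓ y) + a = (x + a) ⊓ (y + a) := by
  rcases le_total x y with h | h
  · rw [inf_eq_left.mpr h, inf_eq_left.mpr (add_le_add_left h a)]
  · rw [inf_eq_right.mpr h, inf_eq_right.mpr (add_le_add_left h a)]

private lemma wb_finsup_add {ι : Type*} (s : Finset ι) (F : ι → WithBot ℝ) (a : WithBot ℝ) :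
    s.sup F + a = s.sup fun i => F i + a := by
  induction s using Finset.cons_induction with
  | empty => simp
  | cons i s h ih => rw [Finset.sup_cons, Finset.sup_cons, wb_sup_add_s11, ih]

private lemma wb_cancel (a : WithBot ℝ) (t : ℝ) :
    a + (t : WithBot ℝ) + ((-t : ℝ) : WithBot ℝ) = a := by
  rw [add_assoc, ← WithBot.coe_add, add_neg_cancel, WithBot.coe_zero, add_zero]

end MaxPlusAux

/-- The makespan objective F(x) = (max_{i,j}(C_{ij} + x_j)) + (max_k (−x_k)). -/
noncomputable def makespan {n : ℕ} (C : Fin n → Fin n → WithBot ℝ)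
    (x : Fin n → ℝ) : WithBot ℝ :=
  (Finset.univ.sup fun i => Finset.univ.sup fun j => C i j + ((x j : ℝ) : WithBot ℝ)) +
    (Finset.univ.sup fun k => ((-(x k) : ℝ) : WithBot ℝ))

/-- Column maxima of C: cbar_j = max_k C_{kj}. -/
noncomputable def cbar {n : ℕ} (C : Fin n → Fin n → WithBot ℝ) (j : Fin n) : WithBot ℝ :=
  Finset.univ.sup fun k => C k j

/-- r_j = max_i (C_{ij} − f_i), the j-th entry of f⁻C. -/
noncomputable def rvec {n : ℕ} (C : Fin n → Fin n → WithBot ℝ) (f : Fin n → ℝ)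
    (j : Fin n) : WithBot ℝ :=
  Finset.univ.sup fun i => C i j + ((-(f i) : ℝ) : WithBot ℝ)

/-- Characterization of the feasible minimizers of the makespan under late-finish and
early-start constraints: x = (I ⊕ θ⁻¹11ᵀC)u with g ≤ u ≤ (f⁻C(I ⊕ θ⁻¹11ᵀC))⁻. -/
theorem stmt_11 {n : ℕ} (hn : 0 < n) (C : Fin n → Fin n → WithBot ℝ)
    (hCrow : ∀ i, ∃ j, C i j ≠ ⊥) (hCcol : ∀ j, ∃ i, C i j ≠ ⊥)
    (f : Fin n → ℝ) (g : Fin n → WithBot ℝ)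
    (hfg : (Finset.univ.sup fun i => Finset.univ.sup fun j =>
        C i j + g j + ((-(f i) : ℝ) : WithBot ℝ)) ≤ 0)
    (θ : ℝ)
    (hθ : (θ : WithBot ℝ) =
      (Finset.univ.sup fun i => Finset.univ.sup fun j => C i j) ⊔
        ((Finset.univ.sup fun i => Finset.univ.sup fun j => C i j + g j) +
          (Finset.univ.sup fun i => Finset.univ.sup fun j =>
            C i j + ((-(f i) : ℝ) : WithBot ℝ))))
    (x : Fin n → ℝ) :
    ((∀ i, (Finset.univ.sup fun j => C i j + ((x j : ℝ) : WithBot ℝ)) ≤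
        ((f i : ℝ) : WithBot ℝ) ∧
      g i ≤ ((x i : ℝ) : WithBot ℝ)) ∧
      makespan C x = (θ : WithBot ℝ)) ↔
      ∃ u : Fin n → ℝ,
        (∀ i, ((x i : ℝ) : WithBot ℝ) =
          ((u i : ℝ) : WithBot ℝ) ⊔
            (((-θ : ℝ) : WithBot ℝ) +
              Finset.univ.sup fun j => cbar C j + ((u j : ℝ) : WithBot ℝ))) ∧
        (∀ j, g j ≤ ((u j : ℝ) : WithBot ℝ) ∧
          (rvec C f j ⊔
            ((Finset.univ.sup fun k => rvec C f k) + ((-θ : ℝ) : WithBot ℝ) + cbar C j)) ≤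
            ((-(u j) : ℝ) : WithBot ℝ)) := by
  -- swap the double sup to column form
  have key : ∀ y : Fin n → ℝ,
      (Finset.univ.sup fun i => Finset.univ.sup fun j => C i j + ((y j : ℝ) : WithBot ℝ))
        = Finset.univ.sup fun j => cbar C j + ((y j : ℝ) : WithBot ℝ) := by
    intro y
    rw [Finset.sup_comm]
    exact Finset.sup_congr rfl fun j _ => (wb_finsup_add _ _ _).symm
  have hR : (Finset.univ.sup fun k => rvec C f k)
      = Finset.univ.sup fun i => Finset.univ.sup fun j =>
          C i j + ((-(f i) : ℝ) : WithBot ℝ) := by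
    simp only [rvec]; exact Finset.sup_comm _ _ _
  have hA : (Finset.univ.sup fun i => Finset.univ.sup fun j => C i j) ≤ (θ : WithBot ℝ) :=
    hθ ▸ le_sup_left
  constructor
  · rintro ⟨hfeas, hmk⟩
    simp only [makespan] at hmk
    rw [key x] at hmk
    set M := Finset.univ.sup fun j => cbar C j + ((x j : ℝ) : WithBot ℝ) with hMdef
    set T := Finset.univ.sup fun k => ((-(x k) : ℝ) : WithBot ℝ) with hTdef
    have hrle : ∀ j, rvec C f j ≤ ((-(x j) : ℝ) : WithBot ℝ) := by
      intro j
      refine Finset.sup_le fun i _ => ?_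
      have h1 : C i j + ((x j : ℝ) : WithBot ℝ) ≤ ((f i : ℝ) : WithBot ℝ) :=
        le_trans (Finset.le_sup (f := fun j => C i j + ((x j : ℝ) : WithBot ℝ))
          (Finset.mem_univ j)) (hfeas i).1
      have h2 : C i j ≤ ((f i - x j : ℝ) : WithBot ℝ) := (wb_coe_shift _ _ _).mp h1
      rw [wb_coe_shift, show (-(x j) - -(f i)) = f i - x j from by ring]
      exact h2
    refine ⟨x, fun i => ?_, fun j => ⟨(hfeas j).2, ?_⟩⟩
    · refine (sup_eq_left.mpr ?_).symm
      rw [add_comm]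
      have hT : ((-(x i) : ℝ) : WithBot ℝ) ≤ T :=
        Finset.le_sup (f := fun k => ((-(x k) : ℝ) : WithBot ℝ)) (Finset.mem_univ i)
      have h1 : M + ((-(x i) : ℝ) : WithBot ℝ) ≤ (θ : WithBot ℝ) := by
        rw [← hmk]; exact add_le_add_right hT M
      have h2 : M ≤ ((θ - -(x i) : ℝ) : WithBot ℝ) := (wb_coe_shift _ _ _).mp h1
      rw [wb_coe_shift, show (x i - -θ) = θ - -(x i) from by ring]
      exact h2
    · refine sup_le (hrle j) ?_
      have hc : cbar C j + ((x j : ℝ) : WithBot ℝ) ≤ M :=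
        Finset.le_sup (f := fun j => cbar C j + ((x j : ℝ) : WithBot ℝ)) (Finset.mem_univ j)
      have hRT : (Finset.univ.sup fun k => rvec C f k) ≤ T :=
        Finset.sup_le fun k _ => le_trans (hrle k)
          (Finset.le_sup (f := fun k => ((-(x k) : ℝ) : WithBot ℝ)) (Finset.mem_univ k))
      have h1 : (Finset.univ.sup fun k => rvec C f k) + (cbar C j + ((x j : ℝ) : WithBot ℝ))
          ≤ (θ : WithBot ℝ) := by
        calc _ ≤ T + M := add_le_add hRT hc
          _ = M + T := add_comm _ _
          _ = _ := hmk
      rw [← add_assoc] at h1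
      have h2 : (Finset.univ.sup fun k => rvec C f k) + cbar C j
          ≤ ((θ - x j : ℝ) : WithBot ℝ) := (wb_coe_shift _ _ _).mp h1
      rw [add_right_comm, wb_coe_shift, show (-(x j) - -θ) = θ - x j from by ring]
      exact h2
  · rintro ⟨u, hx, hu⟩
    set M := Finset.univ.sup fun j => cbar C j + ((u j : ℝ) : WithBot ℝ) with hMdef
    set N := Finset.univ.sup fun k => ((-(u k) : ℝ) : WithBot ℝ) with hNdef
    have hub : ∀ j, rvec C f j ≤ ((-(u j) : ℝ) : WithBot ℝ) :=
      fun j => le_trans le_sup_left (hu j).2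
    have hub2 : ∀ j, (Finset.univ.sup fun k => rvec C f k) + ((-θ : ℝ) : WithBot ℝ)
        + cbar C j ≤ ((-(u j) : ℝ) : WithBot ℝ) :=
      fun j => le_trans le_sup_right (hu j).2
    have hcbA : ∀ j, cbar C j ≤ (θ : WithBot ℝ) := by
      intro j
      refine le_trans ?_ hA
      refine Finset.sup_le fun k _ => ?_
      exact le_trans (Finset.le_sup (f := fun j => C k j) (Finset.mem_univ j))
        (Finset.le_sup (f := fun k => Finset.univ.sup fun j => C k j) (Finset.mem_univ k))
    -- the key upper bound: cbar k + u k ≤ θ - R pointwise, via hub2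
    have hMbd : ∀ (k : Fin n) (d : ℝ),
        ((d : ℝ) : WithBot ℝ) ≤ (Finset.univ.sup fun k => rvec C f k) →
        cbar C k + ((u k : ℝ) : WithBot ℝ) ≤ ((θ - d : ℝ) : WithBot ℝ) := by
      intro k d hd
      have h1 := hub2 k
      rw [add_right_comm, wb_coe_shift] at h1
      -- h1 : R + cbar k ≤ ↑(-(u k) - -θ)
      have h2 : (Finset.univ.sup fun k => rvec C f k) + cbar C k
          + ((u k : ℝ) : WithBot ℝ) ≤ (θ : WithBot ℝ) := by
        rw [wb_coe_shift, show (θ - u k) = -(u k) - -θ from by ring]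
        exact h1
      have h3 : ((d : ℝ) : WithBot ℝ) + (cbar C k + ((u k : ℝ) : WithBot ℝ))
          ≤ (θ : WithBot ℝ) := by
        rw [← add_assoc]
        exact le_trans (add_le_add_left (add_le_add_left hd _) _) h2
      rw [add_comm, wb_coe_shift] at h3
      exact h3
    have hfeas : ∀ i, (Finset.univ.sup fun j => C i j + ((x j : ℝ) : WithBot ℝ))
        ≤ ((f i : ℝ) : WithBot ℝ) ∧ g i ≤ ((x i : ℝ) : WithBot ℝ) := by
      intro i
      constructor
      · refine Finset.sup_le fun j _ => ?_
        rw [hx j, wb_add_sup_s11]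
        refine sup_le ?_ ?_
        · have h0 : C i j + ((-(f i) : ℝ) : WithBot ℝ) ≤ rvec C f j := by
            simp only [rvec]
            exact Finset.le_sup (f := fun i => C i j + ((-(f i) : ℝ) : WithBot ℝ))
              (Finset.mem_univ i)
          have h1 : C i j + ((-(f i) : ℝ) : WithBot ℝ) ≤ ((-(u j) : ℝ) : WithBot ℝ) :=
            le_trans h0 (hub j)
          have h2 : C i j ≤ ((-(u j) - -(f i) : ℝ) : WithBot ℝ) := (wb_coe_shift _ _ _).mp h1
          rw [wb_coe_shift, show (f i - u j) = -(u j) - -(f i) from by ring]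
          exact h2
        · rcases eq_or_ne (C i j) ⊥ with hb | hb
          · rw [hb, WithBot.bot_add]; exact bot_le
          · obtain ⟨c, hc⟩ := WithBot.ne_bot_iff_exists.mp hb
            have hdR : ((c - f i : ℝ) : WithBot ℝ) ≤ Finset.univ.sup fun k => rvec C f k := by
              have : ((c - f i : ℝ) : WithBot ℝ) = C i j + ((-(f i) : ℝ) : WithBot ℝ) := by
                rw [← hc, ← WithBot.coe_add, show c + -(f i) = c - f i from by ring]
              rw [this]
              have h0 : C i j + ((-(f i) : ℝ) : WithBot ℝ) ≤ rvec C f j := by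
                simp only [rvec]
                exact Finset.le_sup (f := fun i => C i j + ((-(f i) : ℝ) : WithBot ℝ))
                  (Finset.mem_univ i)
              exact le_trans h0 (Finset.le_sup (f := fun j => rvec C f j)
                (Finset.mem_univ j))
            have hM2 : M ≤ ((θ - (c - f i) : ℝ) : WithBot ℝ) :=
              Finset.sup_le fun k _ => hMbd k (c - f i) hdR
            rw [← hc,
              show ((c : ℝ) : WithBot ℝ) + (((-θ : ℝ) : WithBot ℝ) + M)
                  = M + ((c + -θ : ℝ) : WithBot ℝ) from by
                rw [WithBot.coe_add]; abel,
              wb_coe_shift]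
            refine le_trans hM2 ?_
            rw [WithBot.coe_le_coe]
            linarith [le_refl (0:ℝ)]
      · rw [hx i]
        exact le_trans (hu i).1 le_sup_left
    refine ⟨hfeas, ?_⟩
    -- makespan computation
    simp only [makespan]
    rw [key x]
    -- S = M
    have hS : (Finset.univ.sup fun j => cbar C j + ((x j : ℝ) : WithBot ℝ)) = M := by
      refine le_antisymm ?_ ?_
      · refine Finset.sup_le fun j _ => ?_
        rw [hx j, wb_add_sup_s11]
        refine sup_le (Finset.le_sup (f := fun j => cbar C j + ((u j : ℝ) : WithBot ℝ))
          (Finset.mem_univ j)) ?_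
        rw [← add_assoc]
        calc cbar C j + ((-θ : ℝ) : WithBot ℝ) + M ≤ 0 + M := by
              refine add_le_add_left ?_ M
              have := add_le_add_left (hcbA j) ((-θ : ℝ) : WithBot ℝ)
              rw [← WithBot.coe_add, add_neg_cancel, WithBot.coe_zero] at this
              exact this
          _ = M := zero_add M
      · refine Finset.sup_le fun j _ => ?_
        refine le_trans ?_ (Finset.le_sup (f := fun j => cbar C j + ((x j : ℝ) : WithBot ℝ))
          (Finset.mem_univ j))
        refine add_le_add_right ?_ _
        rw [hx j]; exact le_sup_left
    rw [hS]
    -- M is real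
    have hM : M ≠ ⊥ := by
      obtain ⟨i0, hi0⟩ := hCcol ⟨0, hn⟩
      have hcb : cbar C ⟨0, hn⟩ ≠ ⊥ := by
        refine ne_bot_of_le_ne_bot hi0 ?_
        simp only [cbar]
        exact Finset.le_sup (f := fun k => C k ⟨0, hn⟩) (Finset.mem_univ i0)
      have h1 : cbar C ⟨0, hn⟩ + ((u ⟨0, hn⟩ : ℝ) : WithBot ℝ) ≠ ⊥ :=
        WithBot.add_ne_bot.mpr ⟨hcb, WithBot.coe_ne_bot⟩
      exact ne_bot_of_le_ne_bot h1
        (Finset.le_sup (f := fun j => cbar C j + ((u j : ℝ) : WithBot ℝ))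
          (Finset.mem_univ (⟨0, hn⟩ : Fin n)))
    obtain ⟨m, hm⟩ := WithBot.ne_bot_iff_exists.mp hM
    -- x k = max (u k) (-θ + m)
    have hxk : ∀ k, x k = (u k) ⊔ (-θ + m) := by
      intro k
      have h1 := hx k
      rw [← hm, ← WithBot.coe_add, ← WithBot.coe_sup] at h1
      exact WithBot.coe_inj.mp h1
    -- T = N ⊓ (θ - m)
    have hT : (Finset.univ.sup fun k => ((-(x k) : ℝ) : WithBot ℝ))
        = N ⊓ ((θ - m : ℝ) : WithBot ℝ) := by
      have e1 : (Finset.univ.sup fun k => ((-(x k) : ℝ) : WithBot ℝ))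
          = Finset.univ.sup fun k =>
              (((-(u k) : ℝ) : WithBot ℝ) ⊓ ((θ - m : ℝ) : WithBot ℝ)) :=
        Finset.sup_congr rfl fun k _ => by
          rw [hxk k, show -((u k) ⊔ (-θ + m)) = (-(u k)) ⊓ (θ - m) from by
            rw [neg_sup, show -(-θ + m) = θ - m from by ring], WithBot.coe_inf]
      rw [e1, ← Finset.sup_inf_distrib_right]
    rw [hT, ← hm, add_comm ((m : ℝ) : WithBot ℝ)
        (N ⊓ ((θ - m : ℝ) : WithBot ℝ)), wb_inf_add, ← WithBot.coe_add,
      show θ - m + m = θ from by ring]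
    -- need θ ≤ N + m, i.e. θ ≤ M + N
    refine inf_eq_right.mpr ?_
    rw [add_comm N, hm]
    -- show θ ≤ M + N
    have hAMN : (Finset.univ.sup fun i => Finset.univ.sup fun j => C i j) ≤ M + N := by
      refine Finset.sup_le fun i _ => Finset.sup_le fun j _ => ?_
      have h1 : C i j ≤ cbar C j := by
        simp only [cbar]; exact Finset.le_sup (f := fun k => C k j) (Finset.mem_univ i)
      have h2 : cbar C j + ((u j : ℝ) : WithBot ℝ) + ((-(u j) : ℝ) : WithBot ℝ) ≤ M + N :=
        add_le_add
          (Finset.le_sup (f := fun j => cbar C j + ((u j : ℝ) : WithBot ℝ))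
            (Finset.mem_univ j))
          (Finset.le_sup (f := fun k => ((-(u k) : ℝ) : WithBot ℝ)) (Finset.mem_univ j))
      rw [wb_cancel] at h2
      exact le_trans h1 h2
    have hPMN : (Finset.univ.sup fun i => Finset.univ.sup fun j => C i j + g j) ≤ M := by
      refine Finset.sup_le fun i _ => Finset.sup_le fun j _ => ?_
      refine le_trans ?_ (Finset.le_sup (Finset.mem_univ j))
      have h1 : C i j ≤ cbar C j := by
        simp only [cbar]; exact Finset.le_sup (f := fun k => C k j) (Finset.mem_univ i)
      exact add_le_add h1 (hu j).1
    have hQN : (Finset.univ.sup fun i => Finset.univ.sup fun j =>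
        C i j + ((-(f i) : ℝ) : WithBot ℝ)) ≤ N := by
      rw [← hR]
      exact Finset.sup_le fun k _ => le_trans (hub k)
        (Finset.le_sup (f := fun k => ((-(u k) : ℝ) : WithBot ℝ)) (Finset.mem_univ k))
    calc (θ : WithBot ℝ) = _ := hθ
      _ ≤ M + N := sup_le hAMN (add_le_add hPMN hQN)
end
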